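/- Let A : ℕ → S be an allocation satisfying |f(s)·N − |{k < N : A[k] = s}|| ≤ 1 for all s ∈ S and all N ∈ ℕ, and suppose |S| ≥ 2. Then there exists a constant K > 0 (which may depend on S, f, and A) such that for all integers m ≥ 1 and n ≥ 1, the expected number of bits per symbol EB(n) = (1/m)·Σ_{s_1,…,s_m ∈ S} f(s_1)⋯f(s_m)·(bits(C(s_1⋯s_m, n)) − bits(n)) satisfies |EB(n) − H| ≤ K·(1/m + (1/(m·n))·min{m, (1 − Σ_{s∈S} f(s)²)^{−1}}), where H = −Σ_{s∈S} f(s)·log₂ f(s) is the Shannon entropy. -/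

import Mathlib

open Finset

/-- The number of occurrences of the symbol `s` among the first `N` terms of `A`. -/
def nOcc {S : Type*} [DecidableEq S] (A : ℕ → S) (s : S) (N : ℕ) : ℕ :=
  ((Finset.range N).filter fun k => A k = s).card

/-- `rnk A s n` is the number of occurrences of `s` among `A 0, …, A n`. -/
def rnk {S : Type*} [DecidableEq S] (A : ℕ → S) (s : S) (n : ℕ) : ℕ :=
  ((Finset.range (n + 1)).filter fun k => A k = s).card

/-- `sel A s n` is the index of the `n`-th occurrence of `s` in `A`. -/
noncomputable def sel {S : Type*} [DecidableEq S] (A : ℕ → S) (s : S) (n : ℕ) : ℕ :=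
  sInf {k : ℕ | n ≤ rnk A s k}

/-- Asymmetric-numeral-system encoding of a single symbol. -/
noncomputable def ansEnc {S : Type*} [DecidableEq S] (A : ℕ → S) (s : S) (n : ℕ) : ℕ :=
  sel A s (n + 1)

/-- Asymmetric-numeral-system encoding of a word. -/
noncomputable def ansEncWord {S : Type*} [DecidableEq S] (A : ℕ → S) : List S → ℕ → ℕ
  | [], n => n
  | s :: w, n => ansEnc A s (ansEncWord A w n)

/-- The number of bits of a non-negative integer: `bits 0 = 1`, `bits ℓ = ⌊log₂ ℓ⌋ + 1`. -/
def bits (n : ℕ) : ℕ := Nat.log 2 n + 1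

section Aux

variable {S : Type*} [Fintype S] [DecidableEq S]

lemma rnk_eq_nOcc (A : ℕ → S) (s : S) (k : ℕ) : rnk A s k = nOcc A s (k + 1) := rfl

lemma nOcc_le_self (A : ℕ → S) (s : S) (N : ℕ) : nOcc A s N ≤ N := by
  classical
  calc nOcc A s N ≤ (Finset.range N).card := Finset.card_filter_le _ _
  _ = N := Finset.card_range N

lemma ansEnc_eq_sInf (A : ℕ → S) (s : S) (x : ℕ) :
    ansEnc A s x = sInf {k : ℕ | x + 1 ≤ rnk A s k} := rfl

lemma ansEnc_setNonempty (f : S → ℝ) (hf0 : ∀ s, 0 < f s) (A : ℕ → S)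
    (hA : ∀ (s : S) (N : ℕ), |f s * (N : ℝ) - (nOcc A s N : ℝ)| ≤ 1)
    (s : S) (x : ℕ) : {k : ℕ | x + 1 ≤ rnk A s k}.Nonempty := by
  have hfs := hf0 s
  obtain ⟨N, hN⟩ := exists_nat_ge (((x : ℝ) + 2) / f s)
  have hfN : (x : ℝ) + 2 ≤ f s * N := by
    rw [div_le_iff₀ hfs] at hN
    linarith [hN]
  have hocc : (x : ℝ) + 1 ≤ (nOcc A s N : ℝ) := by
    have h := abs_le.mp (hA s N)
    linarith [h.1]
  have hoccN : x + 1 ≤ nOcc A s N := by exact_mod_cast hocc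
  have hN1 : 1 ≤ N := by
    rcases Nat.eq_zero_or_pos N with h | h
    · exfalso; subst h; simp at hfN; nlinarith [Nat.cast_nonneg (α := ℝ) x]
    · exact h
  refine ⟨N - 1, ?_⟩
  simp only [Set.mem_setOf_eq, rnk_eq_nOcc]
  rwa [Nat.sub_add_cancel hN1]

lemma ansEnc_mem (f : S → ℝ) (hf0 : ∀ s, 0 < f s) (A : ℕ → S)
    (hA : ∀ (s : S) (N : ℕ), |f s * (N : ℝ) - (nOcc A s N : ℝ)| ≤ 1)
    (s : S) (x : ℕ) : x + 1 ≤ nOcc A s (ansEnc A s x + 1) := by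
  have h := Nat.sInf_mem (ansEnc_setNonempty f hf0 A hA s x)
  rw [← ansEnc_eq_sInf] at h
  exact h

lemma ansEnc_spec (f : S → ℝ) (hf0 : ∀ s, 0 < f s) (A : ℕ → S)
    (hA : ∀ (s : S) (N : ℕ), |f s * (N : ℝ) - (nOcc A s N : ℝ)| ≤ 1)
    (s : S) (x : ℕ) :
    x ≤ ansEnc A s x ∧ (x : ℝ) ≤ f s * ((ansEnc A s x : ℝ) + 1) ∧
      f s * (ansEnc A s x : ℝ) ≤ (x : ℝ) + 1 := by
  classical
  set a := ansEnc A s x with ha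
  have h1 : x + 1 ≤ nOcc A s (a + 1) := ansEnc_mem f hf0 A hA s x
  have hxa : x ≤ a := by
    have := nOcc_le_self A s (a + 1); omega
  have hcast : (x : ℝ) + 1 ≤ (nOcc A s (a + 1) : ℝ) := by exact_mod_cast h1
  have hub := abs_le.mp (hA s (a + 1))
  have hii : (x : ℝ) ≤ f s * ((a : ℝ) + 1) := by
    push_cast at hub
    linarith [hub.1, hcast]
  have hiii : f s * (a : ℝ) ≤ (x : ℝ) + 1 := by
    rcases Nat.eq_zero_or_pos a with h0 | h0
    · rw [h0]; push_cast; nlinarith [Nat.cast_nonneg (α := ℝ) x, hf0 s]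
    · have hnot : ¬ (x + 1 ≤ rnk A s (a - 1)) := by
        intro hmem
        have hle : sInf {k : ℕ | x + 1 ≤ rnk A s k} ≤ a - 1 := Nat.sInf_le hmem
        rw [← ansEnc_eq_sInf, ← ha] at hle
        omega
      have hocc2 : nOcc A s a ≤ x := by
        have heq : rnk A s (a - 1) = nOcc A s a := by
          rw [rnk_eq_nOcc, Nat.sub_add_cancel h0]
        omega
      have hub2 := abs_le.mp (hA s a)
      have hc2 : (nOcc A s a : ℝ) ≤ (x : ℝ) := by exact_mod_cast hocc2
      linarith [hub2.2]
  exact ⟨hxa, hii, hiii⟩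

lemma ansEnc_one_ge_two (f : S → ℝ) (hf0 : ∀ s, 0 < f s) (A : ℕ → S)
    (hA : ∀ (s : S) (N : ℕ), |f s * (N : ℝ) - (nOcc A s N : ℝ)| ≤ 1)
    (s : S) (hs : A 0 ≠ s) : 2 ≤ ansEnc A s 1 := by
  classical
  have h1 : 1 ≤ ansEnc A s 1 := (ansEnc_spec f hf0 A hA s 1).1
  rcases Nat.lt_or_ge (ansEnc A s 1) 2 with h | h
  · exfalso
    have ha1 : ansEnc A s 1 = 1 := by omega
    have hmem := ansEnc_mem f hf0 A hA s 1
    rw [ha1] at hmem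
    -- hmem : 2 ≤ nOcc A s 2
    have hsub : (Finset.range 2).filter (fun k => A k = s) = Finset.range 2 :=
      Finset.eq_of_subset_of_card_le (Finset.filter_subset _ _)
        (by simpa [Finset.card_range, nOcc] using hmem)
    have h0 : (0 : ℕ) ∈ (Finset.range 2).filter (fun k => A k = s) := by
      rw [hsub]; simp
    rw [Finset.mem_filter] at h0
    exact hs h0.2
  · exact h

end Aux

open Finset

section Aux2

variable {S : Type*} [Fintype S] [DecidableEq S]

lemma f_lt_one (f : S → ℝ) (hf0 : ∀ s, 0 < f s) (hsum : ∑ s, f s = 1)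
    (hcard : 2 ≤ Fintype.card S) (s : S) : f s < 1 := by
  classical
  obtain ⟨t, hts⟩ := Fintype.exists_ne_of_one_lt_card (by omega) s
  have hmem : t ∈ Finset.univ.erase s := by simp [hts]
  have hsum2 : f s + ∑ x ∈ Finset.univ.erase s, f x = 1 := by
    rw [Finset.add_sum_erase _ f (Finset.mem_univ s)]
    exact hsum
  have hge : f t ≤ ∑ x ∈ Finset.univ.erase s, f x :=
    Finset.single_le_sum (fun i _ => (hf0 i).le) hmem
  linarith [hf0 t]

lemma step_log (f : S → ℝ) (hf0 : ∀ s, 0 < f s) (hsum : ∑ s, f s = 1)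
    (hcard : 2 ≤ Fintype.card S) (A : ℕ → S)
    (hA : ∀ (s : S) (N : ℕ), |f s * (N : ℝ) - (nOcc A s N : ℝ)| ≤ 1)
    (s : S) (x : ℕ) (hx : 1 ≤ x) :
    |Real.logb 2 (ansEnc A s x) - Real.logb 2 x + Real.logb 2 (f s)|
      ≤ (2 * (1 + (1 - f s)⁻¹)) / x := by
  obtain ⟨h1, h2, h3⟩ := ansEnc_spec f hf0 A hA s x
  have hfs := hf0 s
  have hfs1 : f s < 1 := f_lt_one f hf0 hsum hcard s
  have hxR : (1 : ℝ) ≤ (x : ℝ) := by exact_mod_cast hx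
  have hxpos : (0 : ℝ) < x := by linarith
  have hapos : (0 : ℝ) < (ansEnc A s x : ℝ) := by
    have : (1 : ℝ) ≤ (ansEnc A s x : ℝ) := by exact_mod_cast le_trans hx h1
    linarith
  set a : ℝ := (ansEnc A s x : ℝ) with hadef
  set t : ℝ := f s * a / x with htdef
  set c : ℝ := 1 + (1 - f s)⁻¹ with hcdef
  have hinv : (0 : ℝ) < (1 - f s)⁻¹ := by
    apply inv_pos.mpr; linarith
  have hc1 : (1 : ℝ) ≤ c := by rw [hcdef]; linarith
  have htpos : 0 < t := by positivity
  have htu : t ≤ 1 + 1 / x := by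
    rw [htdef, div_le_iff₀ hxpos]
    have he : (1 + 1 / (x : ℝ)) * x = x + 1 := by field_simp
    rw [he]; exact h3
  have htl : 1 - f s / x ≤ t := by
    rw [htdef, le_div_iff₀ hxpos]
    have hdx : f s / (x:ℝ) * (x:ℝ) = f s := div_mul_cancel₀ _ (ne_of_gt hxpos)
    nlinarith [h2, hdx]
  have hlog : |Real.log t| ≤ c / x := by
    rcases le_or_gt 1 t with ht1 | ht1
    · rw [abs_of_nonneg (Real.log_nonneg ht1)]
      have hls := Real.log_le_sub_one_of_pos htpos
      have : Real.log t ≤ 1 / x := by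
        have : t - 1 ≤ 1 / x := by linarith
        linarith
      calc Real.log t ≤ 1 / x := this
      _ ≤ c / x := by gcongr
    · have hlt0 : Real.log t < 0 := Real.log_neg htpos ht1
      rw [abs_of_neg hlt0, ← Real.log_inv]
      have hti : 0 < t⁻¹ := by positivity
      have hls := Real.log_le_sub_one_of_pos hti
      have htb : 1 - f s ≤ t := by
        have hfx : f s / x ≤ f s := by
          rw [div_le_iff₀ hxpos]; nlinarith
        linarith
      have h1mt : 1 - t ≤ f s / x := by linarith
      have hstep : t⁻¹ - 1 ≤ c / x := by
        have e1 : t⁻¹ - 1 = (1 - t) / t := by field_simp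
        have e2 : (1 - t) / t ≤ (f s / x) / (1 - f s) :=
          div_le_div₀ (by positivity) h1mt (by linarith) htb
        have e3 : (f s / x) / (1 - f s) = (f s * (1 - f s)⁻¹) / x := by
          field_simp
        have e4 : (f s * (1 - f s)⁻¹) / x ≤ c / x := by
          have : f s * (1 - f s)⁻¹ ≤ c := by
            rw [hcdef]; have hmu : (1 - f s) * (1 - f s)⁻¹ = 1 := mul_inv_cancel₀ (by linarith)
            nlinarith [hmu, hinv]
          gcongr
        linarith [e1, e2, e3.le, e4]
      linarith
  have hid : Real.logb 2 a - Real.logb 2 x + Real.logb 2 (f s) = Real.logb 2 t := by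
    rw [htdef, Real.logb_div (by positivity) (ne_of_gt hxpos),
      Real.logb_mul (ne_of_gt hfs) (ne_of_gt hapos)]
    ring
  rw [hid]
  have hlogb : |Real.logb 2 t| = |Real.log t| / Real.log 2 := by
    rw [Real.logb, abs_div, abs_of_pos (Real.log_pos one_lt_two)]
  rw [hlogb]
  have hl2 : (1:ℝ)/2 ≤ Real.log 2 := by
    have := Real.log_two_gt_d9; linarith
  calc |Real.log t| / Real.log 2 ≤ |Real.log t| / (1/2) := by
        apply div_le_div_of_nonneg_left (abs_nonneg _) (by norm_num) hl2
  _ = 2 * |Real.log t| := by ring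
  _ ≤ 2 * (c / x) := by linarith [hlog]
  _ = (2 * c) / x := by ring

end Aux2

section Aux3

variable {S : Type*} [Fintype S] [DecidableEq S]

lemma state_sum (f : S → ℝ) (hf0 : ∀ s, 0 < f s) (hsum : ∑ s, f s = 1)
    (hcard : 2 ≤ Fintype.card S) (A : ℕ → S)
    (hA : ∀ (s : S) (N : ℕ), |f s * (N : ℝ) - (nOcc A s N : ℝ)| ≤ 1)
    (x : ℕ) (hx : 1 ≤ x) :
    ∑ s, f s * ((x : ℝ) / (ansEnc A s x : ℝ)) ≤
      max ((1 + f (A 0)) / 2) (∑ s, f s * min 1 (2 * f s / (2 - f s))) := by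
  classical
  rcases eq_or_lt_of_le hx with h1 | h2
  · -- x = 1
    subst h1
    refine le_trans ?_ (le_max_left _ _)
    have hsplit : ∑ s, f s * ((1 : ℕ) : ℝ) / (ansEnc A s 1 : ℝ)
        = f (A 0) * ((1 : ℕ) : ℝ) / (ansEnc A (A 0) 1 : ℝ)
          + ∑ s ∈ Finset.univ.erase (A 0), f s * ((1 : ℕ) : ℝ) / (ansEnc A s 1 : ℝ) :=
      (Finset.add_sum_erase _ _ (Finset.mem_univ _)).symm
    have herase : ∑ s ∈ Finset.univ.erase (A 0), f s = 1 - f (A 0) := by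
      have h := Finset.add_sum_erase Finset.univ f (Finset.mem_univ (A 0))
      linarith [hsum, h]
    have hterm1 : f (A 0) * ((1 : ℕ) : ℝ) / (ansEnc A (A 0) 1 : ℝ) ≤ f (A 0) := by
      have hge : 1 ≤ ansEnc A (A 0) 1 := (ansEnc_spec f hf0 A hA _ 1).1
      have hge' : (1 : ℝ) ≤ (ansEnc A (A 0) 1 : ℝ) := by exact_mod_cast hge
      rw [div_le_iff₀ (by linarith)]
      have := mul_le_mul_of_nonneg_left hge' (hf0 (A 0)).le
      push_cast
      linarith
    have hterm2 : ∑ s ∈ Finset.univ.erase (A 0), f s * ((1 : ℕ) : ℝ) / (ansEnc A s 1 : ℝ)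
        ≤ ∑ s ∈ Finset.univ.erase (A 0), f s * (1 / 2) := by
      apply Finset.sum_le_sum
      intro s hs
      have hne : A 0 ≠ s := by
        rw [Finset.mem_erase] at hs
        exact fun h => hs.1 h.symm
      have hge : 2 ≤ ansEnc A s 1 := ansEnc_one_ge_two f hf0 A hA s hne
      have hge' : (2 : ℝ) ≤ (ansEnc A s 1 : ℝ) := by exact_mod_cast hge
      rw [div_le_iff₀ (by linarith)]
      push_cast
      nlinarith [hf0 s]
    have hsum2 : ∑ s ∈ Finset.univ.erase (A 0), f s * (1 / 2) = (1 - f (A 0)) / 2 := by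
      rw [← Finset.sum_mul, herase]; ring
    have hgoal : ∑ s, f s * ((1 : ℕ) : ℝ) / (ansEnc A s 1 : ℝ) ≤ (1 + f (A 0)) / 2 := by
      rw [hsplit]
      rw [hsum2] at hterm2
      linarith
    calc ∑ s, f s * (((1 : ℕ) : ℝ) / (ansEnc A s 1 : ℝ))
        = ∑ s, f s * ((1 : ℕ) : ℝ) / (ansEnc A s 1 : ℝ) := by
          apply Finset.sum_congr rfl; intro s _; ring
    _ ≤ (1 + f (A 0)) / 2 := hgoal
  · -- 2 ≤ x
    refine le_trans ?_ (le_max_right _ _)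
    apply Finset.sum_le_sum
    intro s _
    have hfs := hf0 s
    have hfs1 : f s < 1 := f_lt_one f hf0 hsum hcard s
    obtain ⟨ha1, ha2, _⟩ := ansEnc_spec f hf0 A hA s x
    have hx2 : (2 : ℝ) ≤ (x : ℝ) := by exact_mod_cast h2
    have hax : (x : ℝ) ≤ (ansEnc A s x : ℝ) := by exact_mod_cast ha1
    have hapos : (0 : ℝ) < (ansEnc A s x : ℝ) := by linarith
    have hb1 : (x : ℝ) / (ansEnc A s x : ℝ) ≤ 1 := by
      rw [div_le_one hapos]; linarith
    have hb2 : (x : ℝ) / (ansEnc A s x : ℝ) ≤ 2 * f s / (2 - f s) := by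
      rw [div_le_div_iff₀ hapos (by linarith)]
      nlinarith [ha2, mul_nonneg hfs.le (by linarith : (0:ℝ) ≤ (x:ℝ) - 2)]
    exact mul_le_mul_of_nonneg_left (le_min hb1 hb2) (hf0 s).le

lemma G_lt_one (f : S → ℝ) (hf0 : ∀ s, 0 < f s) (hsum : ∑ s, f s = 1)
    (hcard : 2 ≤ Fintype.card S) (A : ℕ → S) :
    max ((1 + f (A 0)) / 2) (∑ s, f s * min 1 (2 * f s / (2 - f s))) < 1 := by
  classical
  apply max_lt
  · have := f_lt_one f hf0 hsum hcard (A 0); linarith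
  · have hterm : ∀ s ∈ Finset.univ, f s * min 1 (2 * f s / (2 - f s)) ≤ f s := by
      intro s _
      nlinarith [min_le_left (1 : ℝ) (2 * f s / (2 - f s)), hf0 s]
    have hex : ∃ s ∈ Finset.univ, f s * min 1 (2 * f s / (2 - f s)) < f s := by
      obtain ⟨a, b, hab⟩ := Fintype.exists_pair_of_one_lt_card (by omega : 1 < Fintype.card S)
      have hab_sum : f a + f b ≤ 1 := by
        have hsub : ({a, b} : Finset S) ⊆ Finset.univ := Finset.subset_univ _
        have h := Finset.sum_le_sum_of_subset_of_nonneg hsub (fun i _ _ => (hf0 i).le)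
        rw [Finset.sum_pair hab] at h
        linarith [hsum]
      have hsmall : f a ≤ 1 / 2 ∨ f b ≤ 1 / 2 := by
        by_contra h; push_neg at h; linarith [h.1, h.2]
      have key : ∀ s0 : S, f s0 ≤ 1 / 2 → f s0 * min 1 (2 * f s0 / (2 - f s0)) < f s0 := by
        intro s0 hs0
        have hfs := hf0 s0
        have hlt : 2 * f s0 / (2 - f s0) < 1 := by
          rw [div_lt_one (by linarith)]; linarith
        have hmin : min 1 (2 * f s0 / (2 - f s0)) < 1 :=
          lt_of_le_of_lt (min_le_right _ _) hlt
        nlinarith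
      rcases hsmall with h | h
      · exact ⟨a, Finset.mem_univ _, key a h⟩
      · exact ⟨b, Finset.mem_univ _, key b h⟩
    calc ∑ s, f s * min 1 (2 * f s / (2 - f s)) < ∑ s, f s := Finset.sum_lt_sum hterm hex
    _ = 1 := hsum

lemma G_nonneg (f : S → ℝ) (hf0 : ∀ s, 0 < f s) (A : ℕ → S) :
    0 ≤ max ((1 + f (A 0)) / 2) (∑ s, f s * min 1 (2 * f s / (2 - f s))) := by
  have : (0:ℝ) ≤ (1 + f (A 0)) / 2 := by linarith [hf0 (A 0)]
  exact le_trans this (le_max_left _ _)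

end Aux3

lemma bits_close (l : ℕ) (hl : 1 ≤ l) : |((bits l : ℝ)) - 1 - Real.logb 2 l| ≤ 1 := by
  have hl0 : (0:ℝ) < (l:ℝ) := by exact_mod_cast hl
  have hlow : ((Nat.log 2 l : ℝ)) ≤ Real.logb 2 l := by
    rw [Real.le_logb_iff_rpow_le one_lt_two hl0, Real.rpow_natCast]
    exact_mod_cast Nat.pow_log_le_self 2 (by omega)
  have hup : Real.logb 2 l < (Nat.log 2 l : ℝ) + 1 := by
    have h2 : ((Nat.log 2 l : ℝ)) + 1 = ((Nat.log 2 l + 1 : ℕ) : ℝ) := by push_cast; ring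
    rw [h2, Real.logb_lt_iff_lt_rpow one_lt_two hl0, Real.rpow_natCast]
    exact_mod_cast Nat.lt_pow_succ_log_self (by norm_num) l
  have hbits : ((bits l : ℝ)) = (Nat.log 2 l : ℝ) + 1 := by
    unfold bits; push_cast; ring
  rw [hbits, abs_le]
  constructor <;> linarith


set_option maxHeartbeats 1000000 in
theorem stmt_17 {S : Type*} [Fintype S] [DecidableEq S]
    (f : S → ℝ) (hf0 : ∀ s, 0 < f s) (hf1 : ∀ s, f s ≤ 1)
    (hsum : ∑ s, f s = 1)
    (hcard : 2 ≤ Fintype.card S)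
    (A : ℕ → S)
    (hA : ∀ (s : S) (N : ℕ), |f s * (N : ℝ) - (nOcc A s N : ℝ)| ≤ 1) :
    ∃ K : ℝ, 0 < K ∧ ∀ m n : ℕ, 1 ≤ m → 1 ≤ n →
      |(1 / (m : ℝ)) * ∑ w : Fin m → S, (∏ i, f (w i)) *
            ((bits (ansEncWord A (List.ofFn w) n) : ℝ) - (bits n : ℝ))
          - (-∑ s, f s * Real.logb 2 (f s))|
        ≤ K * (1 / (m : ℝ)
            + 1 / ((m : ℝ) * (n : ℝ)) * min (m : ℝ) (1 - ∑ s, f s ^ 2)⁻¹) := by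
  classical
  have hNe : Nonempty S := Fintype.card_pos_iff.mp (by omega)
  have hflt : ∀ s, f s < 1 := f_lt_one f hf0 hsum hcard
  set H : ℝ := -∑ s, f s * Real.logb 2 (f s) with hH
  set G : ℝ := max ((1 + f (A 0)) / 2) (∑ s, f s * min 1 (2 * f s / (2 - f s))) with hGdef
  have hG1 : G < 1 := G_lt_one f hf0 hsum hcard A
  have hG0 : 0 ≤ G := G_nonneg f hf0 A
  set C0 : ℝ := ∑ s, 2 * (1 + (1 - f s)⁻¹) with hC0def
  have hC0terms : ∀ s, 0 < 2 * (1 + (1 - f s)⁻¹) := by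
    intro s
    have h1 : 0 < (1 - f s)⁻¹ := inv_pos.mpr (by linarith [hflt s])
    nlinarith
  have hC0pos : 0 < C0 :=
    Finset.sum_pos (fun s _ => hC0terms s) Finset.univ_nonempty
  have hC0s : ∀ s, 2 * (1 + (1 - f s)⁻¹) ≤ C0 := fun s =>
    Finset.single_le_sum (fun i _ => (hC0terms i).le) (Finset.mem_univ s)
  set p : ℝ := ∑ s, f s ^ 2 with hpdef
  have hp1 : p < 1 := by
    rw [hpdef, ← hsum]
    exact Finset.sum_lt_sum_of_nonempty Finset.univ_nonempty
      (fun s _ => by nlinarith [hf0 s, hflt s])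
  have hp0 : 0 ≤ p := Finset.sum_nonneg fun s _ => sq_nonneg _
  set C2 : ℝ := max 1 ((1 - p) / (1 - G)) with hC2def
  have hC2one : (1:ℝ) ≤ C2 := le_max_left _ _
  have hC2pos : (0:ℝ) < C2 := lt_of_lt_of_le one_pos hC2one
  refine ⟨2 + C0 * C2, by positivity, ?_⟩
  intro m n hm hn
  have hmR : (1:ℝ) ≤ (m:ℝ) := by exact_mod_cast hm
  have hnR : (1:ℝ) ≤ (n:ℝ) := by exact_mod_cast hn
  have hmpos : (0:ℝ) < m := by linarith
  have hnpos : (0:ℝ) < n := by linarith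
  -- machinery on sums over words
  have hsplitSum : ∀ (j : ℕ) (F : (Fin (j+1) → S) → ℝ),
      (∑ w : Fin (j+1) → S, F w) = ∑ s : S, ∑ v : Fin j → S, F (Fin.cons s v) := by
    intro j F
    calc (∑ w : Fin (j+1) → S, F w)
        = ∑ q : S × (Fin j → S), F (Fin.cons q.1 q.2) :=
          (Fintype.sum_equiv (Fin.consEquiv fun _ => S)
            (fun q => F (Fin.cons q.1 q.2)) F (fun q => rfl)).symm
    _ = ∑ s : S, ∑ v : Fin j → S, F (Fin.cons s v) := Fintype.sum_prod_type _
  have hprodCons : ∀ (j : ℕ) (s : S) (v : Fin j → S),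
      (∏ i, f ((Fin.cons s v : Fin (j+1) → S) i)) = f s * ∏ i, f (v i) := by
    intro j s v
    rw [Fin.prod_univ_succ]
    simp [Fin.cons_succ]
  have hofnCons : ∀ (j : ℕ) (s : S) (v : Fin j → S),
      List.ofFn (Fin.cons s v) = s :: List.ofFn v := by
    intro j s v
    rw [List.ofFn_succ]
    simp [Fin.cons_succ]
  have hprodNN : ∀ (j : ℕ) (v : Fin j → S), 0 ≤ ∏ i, f (v i) :=
    fun j v => Finset.prod_nonneg fun i _ => (hf0 (v i)).le
  have hencge : ∀ w : List S, n ≤ ansEncWord A w n := by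
    intro w
    induction w with
    | nil => exact le_refl n
    | cons s w ih =>
      calc n ≤ ansEncWord A w n := ih
      _ ≤ ansEnc A s (ansEncWord A w n) := (ansEnc_spec f hf0 A hA s _).1
  have hsumW : ∀ j : ℕ, ∑ v : Fin j → S, (∏ i, f (v i)) = 1 := by
    intro j
    induction j with
    | zero => simp
    | succ j ih =>
      rw [hsplitSum j (fun v => ∏ i, f (v i))]
      have hs : ∀ s : S, ∑ v : Fin j → S, (∏ i, f ((Fin.cons s v : Fin (j+1) → S) i)) = f s := by
        intro s
        calc ∑ v : Fin j → S, (∏ i, f ((Fin.cons s v : Fin (j+1) → S) i))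
            = ∑ v : Fin j → S, f s * ∏ i, f (v i) :=
              Finset.sum_congr rfl fun v _ => hprodCons j s v
        _ = f s * ∑ v : Fin j → S, ∏ i, f (v i) := (Finset.mul_sum _ _ _).symm
        _ = f s := by rw [ih, mul_one]
      rw [Finset.sum_congr rfl fun s _ => hs s]
      exact hsum
  -- expectation of 1/state
  have hexpInv : ∀ j : ℕ,
      ∑ v : Fin j → S, (∏ i, f (v i)) * (1 / (ansEncWord A (List.ofFn v) n : ℝ))
        ≤ G ^ j * (1 / (n:ℝ)) := by
    intro j
    induction j with
    | zero =>
      simp [ansEncWord]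
    | succ j ih =>
      rw [hsplitSum j (fun v => (∏ i, f (v i)) * (1 / (ansEncWord A (List.ofFn v) n : ℝ)))]
      have hstep : ∀ v : Fin j → S,
          ∑ s : S, (∏ i, f ((Fin.cons s v : Fin (j+1) → S) i))
              * (1 / (ansEncWord A (List.ofFn (Fin.cons s v : Fin (j+1) → S)) n : ℝ))
            ≤ G * ((∏ i, f (v i)) * (1 / (ansEncWord A (List.ofFn v) n : ℝ))) := by
        intro v
        set X : ℕ := ansEncWord A (List.ofFn v) n with hXdef
        have hX1 : 1 ≤ X := le_trans hn (hencge _)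
        have hXR : (1:ℝ) ≤ (X:ℝ) := by exact_mod_cast hX1
        have hXpos : (0:ℝ) < (X:ℝ) := by linarith
        have hstate := state_sum f hf0 hsum hcard A hA X hX1
        rw [← hGdef] at hstate
        have hinner : ∑ s : S, f s * (1 / (ansEnc A s X : ℝ)) ≤ G / (X:ℝ) := by
          rw [le_div_iff₀ hXpos]
          have hrw : (∑ s : S, f s * (1 / (ansEnc A s X : ℝ))) * (X:ℝ)
              = ∑ s : S, f s * ((X:ℝ) / (ansEnc A s X : ℝ)) := by
            rw [Finset.sum_mul]
            apply Finset.sum_congr rfl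
            intro s _
            ring
          rw [hrw]
          exact hstate
        calc ∑ s : S, (∏ i, f ((Fin.cons s v : Fin (j+1) → S) i))
              * (1 / (ansEncWord A (List.ofFn (Fin.cons s v : Fin (j+1) → S)) n : ℝ))
            = ∑ s : S, (∏ i, f (v i)) * (f s * (1 / (ansEnc A s X : ℝ))) := by
              apply Finset.sum_congr rfl
              intro s _
              rw [hprodCons j s v, hofnCons j s v]
              have : ansEncWord A (s :: List.ofFn v) n = ansEnc A s X := rfl
              rw [this]
              ring
        _ = (∏ i, f (v i)) * ∑ s : S, f s * (1 / (ansEnc A s X : ℝ)) := (Finset.mul_sum _ _ _).symm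
        _ ≤ (∏ i, f (v i)) * (G / (X:ℝ)) :=
            mul_le_mul_of_nonneg_left hinner (hprodNN j v)
        _ = G * ((∏ i, f (v i)) * (1 / (X:ℝ))) := by ring
      calc ∑ s : S, ∑ v : Fin j → S, (∏ i, f ((Fin.cons s v : Fin (j+1) → S) i))
              * (1 / (ansEncWord A (List.ofFn (Fin.cons s v : Fin (j+1) → S)) n : ℝ))
          = ∑ v : Fin j → S, ∑ s : S, (∏ i, f ((Fin.cons s v : Fin (j+1) → S) i))
              * (1 / (ansEncWord A (List.ofFn (Fin.cons s v : Fin (j+1) → S)) n : ℝ)) :=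
            Finset.sum_comm
      _ ≤ ∑ v : Fin j → S, G * ((∏ i, f (v i)) * (1 / (ansEncWord A (List.ofFn v) n : ℝ))) :=
            Finset.sum_le_sum fun v _ => hstep v
      _ = G * ∑ v : Fin j → S, (∏ i, f (v i)) * (1 / (ansEncWord A (List.ofFn v) n : ℝ)) :=
            (Finset.mul_sum _ _ _).symm
      _ ≤ G * (G ^ j * (1 / (n:ℝ))) := mul_le_mul_of_nonneg_left ih hG0
      _ = G ^ (j+1) * (1 / (n:ℝ)) := by ring
  -- expectation of the log-error
  have hexpErr : ∀ j : ℕ,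
      ∑ v : Fin j → S, (∏ i, f (v i)) *
          |Real.logb 2 (ansEncWord A (List.ofFn v) n : ℝ) - Real.logb 2 (n:ℝ)
            - ∑ i, (-Real.logb 2 (f (v i)))|
        ≤ C0 * (∑ t ∈ Finset.range j, G ^ t) * (1 / (n:ℝ)) := by
    intro j
    induction j with
    | zero =>
      simp [ansEncWord]
    | succ j ih =>
      rw [hsplitSum j (fun v => (∏ i, f (v i)) *
          |Real.logb 2 (ansEncWord A (List.ofFn v) n : ℝ) - Real.logb 2 (n:ℝ)
            - ∑ i, (-Real.logb 2 (f (v i)))|)]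
      have hstep : ∀ (s : S) (v : Fin j → S),
          (∏ i, f ((Fin.cons s v : Fin (j+1) → S) i)) *
            |Real.logb 2 (ansEncWord A (List.ofFn (Fin.cons s v : Fin (j+1) → S)) n : ℝ)
              - Real.logb 2 (n:ℝ)
              - ∑ i, (-Real.logb 2 (f ((Fin.cons s v : Fin (j+1) → S) i)))|
          ≤ f s * ((∏ i, f (v i)) * (C0 * (1 / (ansEncWord A (List.ofFn v) n : ℝ))))
            + f s * ((∏ i, f (v i)) *
              |Real.logb 2 (ansEncWord A (List.ofFn v) n : ℝ) - Real.logb 2 (n:ℝ)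
                - ∑ i, (-Real.logb 2 (f (v i)))|) := by
        intro s v
        set X : ℕ := ansEncWord A (List.ofFn v) n with hXdef
        have hX1 : 1 ≤ X := le_trans hn (hencge _)
        have hXR : (1:ℝ) ≤ (X:ℝ) := by exact_mod_cast hX1
        have hXpos : (0:ℝ) < (X:ℝ) := by linarith
        have henc : ansEncWord A (List.ofFn (Fin.cons s v : Fin (j+1) → S)) n
            = ansEnc A s X := by rw [hofnCons j s v]; rfl
        have hsumc : ∑ i, (-Real.logb 2 (f ((Fin.cons s v : Fin (j+1) → S) i)))
            = (-Real.logb 2 (f s)) + ∑ i, (-Real.logb 2 (f (v i))) := by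
          rw [Fin.sum_univ_succ]
          simp [Fin.cons_succ]
        have htri : |Real.logb 2 (ansEnc A s X : ℝ) - Real.logb 2 (n:ℝ)
              - ((-Real.logb 2 (f s)) + ∑ i, (-Real.logb 2 (f (v i))))|
            ≤ |Real.logb 2 (ansEnc A s X : ℝ) - Real.logb 2 (X:ℝ) + Real.logb 2 (f s)|
              + |Real.logb 2 (X:ℝ) - Real.logb 2 (n:ℝ) - ∑ i, (-Real.logb 2 (f (v i)))| := by
          have : Real.logb 2 (ansEnc A s X : ℝ) - Real.logb 2 (n:ℝ)
              - ((-Real.logb 2 (f s)) + ∑ i, (-Real.logb 2 (f (v i))))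
              = (Real.logb 2 (ansEnc A s X : ℝ) - Real.logb 2 (X:ℝ) + Real.logb 2 (f s))
                + (Real.logb 2 (X:ℝ) - Real.logb 2 (n:ℝ) - ∑ i, (-Real.logb 2 (f (v i)))) := by
            ring
          rw [this]
          exact abs_add_le _ _
        have hstep1 : |Real.logb 2 (ansEnc A s X : ℝ) - Real.logb 2 (X:ℝ) + Real.logb 2 (f s)|
            ≤ C0 * (1 / (X:ℝ)) := by
          calc |Real.logb 2 (ansEnc A s X : ℝ) - Real.logb 2 (X:ℝ) + Real.logb 2 (f s)|
              ≤ (2 * (1 + (1 - f s)⁻¹)) / (X:ℝ) := step_log f hf0 hsum hcard A hA s X hX1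
          _ ≤ C0 / (X:ℝ) := by
              gcongr
              exact hC0s s
          _ = C0 * (1 / (X:ℝ)) := by ring
        rw [henc, hprodCons j s v, hsumc]
        calc f s * (∏ i, f (v i)) *
              |Real.logb 2 (ansEnc A s X : ℝ) - Real.logb 2 (n:ℝ)
                - ((-Real.logb 2 (f s)) + ∑ i, (-Real.logb 2 (f (v i))))|
            ≤ f s * (∏ i, f (v i)) *
              (C0 * (1 / (X:ℝ))
                + |Real.logb 2 (X:ℝ) - Real.logb 2 (n:ℝ) - ∑ i, (-Real.logb 2 (f (v i)))|) := by
              apply mul_le_mul_of_nonneg_left _ (mul_nonneg (hf0 s).le (hprodNN j v))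
              exact le_trans htri (by linarith [hstep1])
        _ = f s * ((∏ i, f (v i)) * (C0 * (1 / (X:ℝ))))
              + f s * ((∏ i, f (v i)) *
                |Real.logb 2 (X:ℝ) - Real.logb 2 (n:ℝ) - ∑ i, (-Real.logb 2 (f (v i)))|) := by
              ring
      calc ∑ s : S, ∑ v : Fin j → S, (∏ i, f ((Fin.cons s v : Fin (j+1) → S) i)) *
              |Real.logb 2 (ansEncWord A (List.ofFn (Fin.cons s v : Fin (j+1) → S)) n : ℝ)
                - Real.logb 2 (n:ℝ)
                - ∑ i, (-Real.logb 2 (f ((Fin.cons s v : Fin (j+1) → S) i)))|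
          ≤ ∑ s : S, ∑ v : Fin j → S,
              (f s * ((∏ i, f (v i)) * (C0 * (1 / (ansEncWord A (List.ofFn v) n : ℝ))))
                + f s * ((∏ i, f (v i)) *
                  |Real.logb 2 (ansEncWord A (List.ofFn v) n : ℝ) - Real.logb 2 (n:ℝ)
                    - ∑ i, (-Real.logb 2 (f (v i)))|)) :=
            Finset.sum_le_sum fun s _ => Finset.sum_le_sum fun v _ => hstep s v
      _ = (∑ s : S, f s * ∑ v : Fin j → S,
              (∏ i, f (v i)) * (C0 * (1 / (ansEncWord A (List.ofFn v) n : ℝ))))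
            + (∑ s : S, f s * ∑ v : Fin j → S, (∏ i, f (v i)) *
              |Real.logb 2 (ansEncWord A (List.ofFn v) n : ℝ) - Real.logb 2 (n:ℝ)
                - ∑ i, (-Real.logb 2 (f (v i)))|) := by
            rw [← Finset.sum_add_distrib]
            apply Finset.sum_congr rfl
            intro s _
            rw [Finset.sum_add_distrib, Finset.mul_sum, Finset.mul_sum]
      _ ≤ (∑ s : S, f s * (C0 * (G ^ j * (1 / (n:ℝ)))))
            + (∑ s : S, f s * (C0 * (∑ t ∈ Finset.range j, G ^ t) * (1 / (n:ℝ)))) := by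
            apply add_le_add <;>
              apply Finset.sum_le_sum <;>
              intro s _ <;>
              apply mul_le_mul_of_nonneg_left _ (hf0 s).le
            · have hrw : ∑ v : Fin j → S,
                  (∏ i, f (v i)) * (C0 * (1 / (ansEncWord A (List.ofFn v) n : ℝ)))
                  = C0 * ∑ v : Fin j → S,
                    (∏ i, f (v i)) * (1 / (ansEncWord A (List.ofFn v) n : ℝ)) := by
                rw [Finset.mul_sum]
                apply Finset.sum_congr rfl
                intro v _
                ring
              rw [hrw]
              exact mul_le_mul_of_nonneg_left (hexpInv j) hC0pos.le
            · exact ih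
      _ = C0 * (∑ t ∈ Finset.range (j+1), G ^ t) * (1 / (n:ℝ)) := by
            rw [← Finset.sum_mul, ← Finset.sum_mul, hsum, Finset.sum_range_succ]
            ring
  -- expectation of the entropy sum
  have hexpEnt : ∀ j : ℕ,
      ∑ v : Fin j → S, (∏ i, f (v i)) * (∑ i, (-Real.logb 2 (f (v i))))
        = (j:ℝ) * H := by
    intro j
    induction j with
    | zero => simp
    | succ j ih =>
      rw [hsplitSum j (fun v => (∏ i, f (v i)) * (∑ i, (-Real.logb 2 (f (v i)))))]
      have hs : ∀ s : S,
          ∑ v : Fin j → S, (∏ i, f ((Fin.cons s v : Fin (j+1) → S) i))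
              * (∑ i, (-Real.logb 2 (f ((Fin.cons s v : Fin (j+1) → S) i))))
          = f s * (-Real.logb 2 (f s)) + f s * ((j:ℝ) * H) := by
        intro s
        have hrw : ∀ v : Fin j → S,
            (∏ i, f ((Fin.cons s v : Fin (j+1) → S) i))
                * (∑ i, (-Real.logb 2 (f ((Fin.cons s v : Fin (j+1) → S) i))))
            = f s * (-Real.logb 2 (f s)) * (∏ i, f (v i))
              + f s * ((∏ i, f (v i)) * (∑ i, (-Real.logb 2 (f (v i))))) := by
          intro v
          have hsumc : ∑ i, (-Real.logb 2 (f ((Fin.cons s v : Fin (j+1) → S) i)))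
              = (-Real.logb 2 (f s)) + ∑ i, (-Real.logb 2 (f (v i))) := by
            rw [Fin.sum_univ_succ]
            simp [Fin.cons_succ]
          rw [hprodCons j s v, hsumc]
          ring
        rw [Finset.sum_congr rfl fun v _ => hrw v, Finset.sum_add_distrib,
          ← Finset.mul_sum, ← Finset.mul_sum, hsumW j, ih, mul_one]
      rw [Finset.sum_congr rfl fun s _ => hs s, Finset.sum_add_distrib,
        ← Finset.sum_mul, hsum]
      have : ∑ s : S, f s * (-Real.logb 2 (f s)) = H := by
        rw [hH, ← Finset.sum_neg_distrib]
        apply Finset.sum_congr rfl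
        intro s _
        ring
      rw [this]
      push_cast
      ring
  -- pointwise bits-vs-log comparison
  have hpoint : ∀ w : Fin m → S,
      |((bits (ansEncWord A (List.ofFn w) n) : ℝ) - (bits n : ℝ))
          - ∑ i, (-Real.logb 2 (f (w i)))|
        ≤ 2 + |Real.logb 2 (ansEncWord A (List.ofFn w) n : ℝ) - Real.logb 2 (n:ℝ)
              - ∑ i, (-Real.logb 2 (f (w i)))| := by
    intro w
    set E : ℕ := ansEncWord A (List.ofFn w) n with hEdef
    have hE1 : 1 ≤ E := le_trans hn (hencge _)
    have hb1 := bits_close E hE1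
    have hb2 := bits_close n hn
    have hrw : ((bits E : ℝ) - (bits n : ℝ)) - ∑ i, (-Real.logb 2 (f (w i)))
        = (((bits E : ℝ) - 1 - Real.logb 2 (E:ℝ)) - ((bits n : ℝ) - 1 - Real.logb 2 (n:ℝ)))
          + (Real.logb 2 (E:ℝ) - Real.logb 2 (n:ℝ) - ∑ i, (-Real.logb 2 (f (w i)))) := by
      ring
    rw [hrw]
    calc |(((bits E : ℝ) - 1 - Real.logb 2 (E:ℝ)) - ((bits n : ℝ) - 1 - Real.logb 2 (n:ℝ)))
          + (Real.logb 2 (E:ℝ) - Real.logb 2 (n:ℝ) - ∑ i, (-Real.logb 2 (f (w i))))|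
        ≤ |((bits E : ℝ) - 1 - Real.logb 2 (E:ℝ)) - ((bits n : ℝ) - 1 - Real.logb 2 (n:ℝ))|
          + |Real.logb 2 (E:ℝ) - Real.logb 2 (n:ℝ) - ∑ i, (-Real.logb 2 (f (w i)))| :=
          abs_add_le _ _
    _ ≤ (|(bits E : ℝ) - 1 - Real.logb 2 (E:ℝ)| + |(bits n : ℝ) - 1 - Real.logb 2 (n:ℝ)|)
          + |Real.logb 2 (E:ℝ) - Real.logb 2 (n:ℝ) - ∑ i, (-Real.logb 2 (f (w i)))| := by
          have := abs_sub ((bits E : ℝ) - 1 - Real.logb 2 (E:ℝ))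
            ((bits n : ℝ) - 1 - Real.logb 2 (n:ℝ))
          linarith
    _ ≤ 2 + |Real.logb 2 (E:ℝ) - Real.logb 2 (n:ℝ) - ∑ i, (-Real.logb 2 (f (w i)))| := by
          linarith
  -- the key bound
  have hkey : |(∑ w : Fin m → S, (∏ i, f (w i)) *
        ((bits (ansEncWord A (List.ofFn w) n) : ℝ) - (bits n : ℝ))) - (m:ℝ) * H|
      ≤ 2 + C0 * (∑ t ∈ Finset.range m, G ^ t) * (1 / (n:ℝ)) := by
    have hdecomp : (∑ w : Fin m → S, (∏ i, f (w i)) *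
          ((bits (ansEncWord A (List.ofFn w) n) : ℝ) - (bits n : ℝ))) - (m:ℝ) * H
        = ∑ w : Fin m → S, (∏ i, f (w i)) *
            (((bits (ansEncWord A (List.ofFn w) n) : ℝ) - (bits n : ℝ))
              - ∑ i, (-Real.logb 2 (f (w i)))) := by
      rw [← hexpEnt m, ← Finset.sum_sub_distrib]
      apply Finset.sum_congr rfl
      intro w _
      ring
    rw [hdecomp]
    calc |∑ w : Fin m → S, (∏ i, f (w i)) *
            (((bits (ansEncWord A (List.ofFn w) n) : ℝ) - (bits n : ℝ))
              - ∑ i, (-Real.logb 2 (f (w i))))|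
        ≤ ∑ w : Fin m → S, |(∏ i, f (w i)) *
            (((bits (ansEncWord A (List.ofFn w) n) : ℝ) - (bits n : ℝ))
              - ∑ i, (-Real.logb 2 (f (w i))))| := Finset.abs_sum_le_sum_abs _ _
    _ = ∑ w : Fin m → S, (∏ i, f (w i)) *
            |((bits (ansEncWord A (List.ofFn w) n) : ℝ) - (bits n : ℝ))
              - ∑ i, (-Real.logb 2 (f (w i)))| := by
          apply Finset.sum_congr rfl
          intro w _
          rw [abs_mul, abs_of_nonneg (hprodNN m w)]
    _ ≤ ∑ w : Fin m → S, (∏ i, f (w i)) *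
            (2 + |Real.logb 2 (ansEncWord A (List.ofFn w) n : ℝ) - Real.logb 2 (n:ℝ)
              - ∑ i, (-Real.logb 2 (f (w i)))|) :=
          Finset.sum_le_sum fun w _ =>
            mul_le_mul_of_nonneg_left (hpoint w) (hprodNN m w)
    _ = 2 * (∑ w : Fin m → S, (∏ i, f (w i)))
          + ∑ w : Fin m → S, (∏ i, f (w i)) *
            |Real.logb 2 (ansEncWord A (List.ofFn w) n : ℝ) - Real.logb 2 (n:ℝ)
              - ∑ i, (-Real.logb 2 (f (w i)))| := by
          rw [Finset.mul_sum, ← Finset.sum_add_distrib]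
          apply Finset.sum_congr rfl
          intro w _
          ring
    _ ≤ 2 * 1 + C0 * (∑ t ∈ Finset.range m, G ^ t) * (1 / (n:ℝ)) := by
          rw [hsumW m]
          exact add_le_add (le_refl _) (hexpErr m)
    _ = 2 + C0 * (∑ t ∈ Finset.range m, G ^ t) * (1 / (n:ℝ)) := by ring
  -- geometric sum bound
  have hgeom : (∑ t ∈ Finset.range m, G ^ t) ≤ C2 * min (m:ℝ) ((1 - p)⁻¹) := by
    have hle_m : (∑ t ∈ Finset.range m, G ^ t) ≤ (m:ℝ) := by
      calc ∑ t ∈ Finset.range m, G ^ t ≤ ∑ t ∈ Finset.range m, 1 :=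
        Finset.sum_le_sum fun t _ => pow_le_one₀ hG0 hG1.le
      _ = (m:ℝ) := by simp
    have h1G : (0:ℝ) < 1 - G := by linarith
    have hle_q : (∑ t ∈ Finset.range m, G ^ t) ≤ (1 - G)⁻¹ := by
      rw [geom_sum_eq (ne_of_lt hG1) m]
      have hrw : (G ^ m - 1) / (G - 1) = (1 - G ^ m) / (1 - G) := by
        rw [div_eq_div_iff (by intro h; nlinarith [h] : (G:ℝ) - 1 ≠ 0)
          (by intro h; nlinarith [h] : (1:ℝ) - G ≠ 0)]
        ring
      rw [hrw, ← one_div]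
      gcongr <;> nlinarith [pow_nonneg hG0 m]
    rcases le_total (m:ℝ) ((1 - p)⁻¹) with hc | hc
    · rw [min_eq_left hc]
      calc (∑ t ∈ Finset.range m, G ^ t) ≤ (m:ℝ) := hle_m
      _ ≤ C2 * (m:ℝ) := by nlinarith [hC2one, hmpos]
    · rw [min_eq_right hc]
      have h1p : (0:ℝ) < 1 - p := by linarith
      have hC2b : (1 - p) / (1 - G) ≤ C2 := le_max_right _ _
      calc (∑ t ∈ Finset.range m, G ^ t) ≤ (1 - G)⁻¹ := hle_q
      _ = ((1 - p) / (1 - G)) * (1 - p)⁻¹ := by field_simp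
      _ ≤ C2 * (1 - p)⁻¹ :=
          mul_le_mul_of_nonneg_right hC2b (inv_nonneg.mpr (by linarith))
  -- final assembly
  set Sm : ℝ := ∑ w : Fin m → S, (∏ i, f (w i)) *
      ((bits (ansEncWord A (List.ofFn w) n) : ℝ) - (bits n : ℝ)) with hSmdef
  set M : ℝ := min (m:ℝ) ((1 - p)⁻¹) with hMdef
  have hM0 : 0 ≤ M := le_min (by linarith) (inv_nonneg.mpr (by linarith))
  have habs : |1 / (m:ℝ) * Sm - H| = (1 / (m:ℝ)) * |Sm - (m:ℝ) * H| := by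
    rw [show 1 / (m:ℝ) * Sm - H = (1 / (m:ℝ)) * (Sm - (m:ℝ) * H) by
      field_simp]
    rw [abs_mul, abs_of_pos (by positivity : (0:ℝ) < 1 / (m:ℝ))]
  rw [habs]
  have hchain : |Sm - (m:ℝ) * H| ≤ 2 + (C0 * C2) * M * (1 / (n:ℝ)) := by
    have h2 : C0 * (∑ t ∈ Finset.range m, G ^ t) * (1 / (n:ℝ))
        ≤ (C0 * C2) * M * (1 / (n:ℝ)) := by
      have hh := mul_le_mul_of_nonneg_left hgeom hC0pos.le
      have hninv : (0:ℝ) ≤ 1 / (n:ℝ) := by positivity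
      nlinarith [hh, hninv]
    linarith [hkey, h2]
  have hfin1 : (1 / (m:ℝ)) * (2 + (C0 * C2) * M * (1 / (n:ℝ)))
      = 2 * (1 / (m:ℝ)) + (C0 * C2) * (1 / ((m:ℝ) * (n:ℝ)) * M) := by
    field_simp
  have hC0C2 : (0:ℝ) ≤ C0 * C2 := by positivity
  have hterm2 : (0:ℝ) ≤ 1 / ((m:ℝ) * (n:ℝ)) * M := by positivity
  have hterm1 : (0:ℝ) ≤ 1 / (m:ℝ) := by positivity
  calc (1 / (m:ℝ)) * |Sm - (m:ℝ) * H|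
      ≤ (1 / (m:ℝ)) * (2 + (C0 * C2) * M * (1 / (n:ℝ))) :=
        mul_le_mul_of_nonneg_left hchain hterm1
  _ = 2 * (1 / (m:ℝ)) + (C0 * C2) * (1 / ((m:ℝ) * (n:ℝ)) * M) := hfin1
  _ ≤ (2 + C0 * C2) * (1 / (m:ℝ) + 1 / ((m:ℝ) * (n:ℝ)) * M) := by nlinarith
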